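/- Define 𝔻: Λ*E ⊗ Λ*E → Λ*E ⊗ Λ*E by 𝔻(x⊗y) = x⊗y + xθ⊗θ̄y − xθ̄⊗θy − xρ⊗ρy (all products taken in 𝒩; these operations preserve Λ*E). Let V = ℝ⁴ with basis a₁, b₁, a₂, b₂, and let [D] be the linear automorphism of V with [D]a₁ = a₁, [D]a₂ = a₂, [D]b₁ = b₁ − a₂, [D]b₂ = b₂ − a₁. Let φ: Λ*E → Λ*(ℝ²) be the linear isomorphism with φ(1) = b, φ(ρ) = a, φ(θ) = a∧b, φ(θ̄) = 1; let φ_i (i = 1,2) be φ followed by the map of exterior algebras induced by the inclusion a ↦ a_i, b ↦ b_i into V; and let d: {1, θ, θ̄, ρ} → {0,1} be given by d(1) = d(ρ) = 1 and d(θ) = d(θ̄) = 0 (the mod-2 degree of φ(x)). Define ξ₂: Λ*E ⊗ Λ*E → Λ*V on basis tensors by ξ₂(x⊗y) := (−1)^{d(x)·(1−d(y))}·φ₁(x) ∧ φ₂(y), extended linearly. Then ξ₂ ∘ 𝔻 = Λ*([D]) ∘ ξ₂, where Λ*([D]) is the induced algebra automorphism of Λ*V. -/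
import Mathlib


noncomputable section

open TensorProduct

/-- The quadratic form `q(x₀,x₁,x₂) = x₀²` on `ℝ³`. -/
def Nform : QuadraticForm ℝ (Fin 3 → ℝ) :=
  QuadraticMap.weightedSumSquares ℝ (fun i : Fin 3 => if i = 0 then (1 : ℝ) else 0)

/-- The algebra `𝒩 = ℤ/2 ⋉ Λ*ℝ²`, realized as the Clifford algebra of `Nform`. -/
abbrev NA := CliffordAlgebra Nform

/-- The generator `K`. -/
def K : NA := CliffordAlgebra.ι Nform (Pi.single 0 1)

/-- The generator `θ`. -/
def θ : NA := CliffordAlgebra.ι Nform (Pi.single 1 1)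

/-- The generator `θ̄`. -/
def θb : NA := CliffordAlgebra.ι Nform (Pi.single 2 1)

/-- `ρ := θ̄θ`. -/
def ρ : NA := θb * θ

/-- `V = ℝ⁴` with basis `a₁ = e₀, b₁ = e₁, a₂ = e₂, b₂ = e₃`. -/
abbrev V4 := Fin 4 → ℝ

/-- The exterior algebra `Λ*V`. -/
abbrev ΛV := ExteriorAlgebra ℝ V4

/-- The basis vectors of `V` inside `Λ*V`. -/
def e (i : Fin 4) : ΛV := ExteriorAlgebra.ι ℝ (Pi.single i 1)

/-- The basis `1, θ, θ̄, ρ` of `Λ*E ⊆ 𝒩`. -/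
def bas : Fin 4 → NA := ![1, θ, θb, ρ]

/-- The mod-2 degrees `d(1) = d(ρ) = 1`, `d(θ) = d(θ̄) = 0` of the images under `φ`. -/
def dg : Fin 4 → ℕ := ![1, 0, 0, 1]

/-- `φ₁`: the images `φ(1) = b₁, φ(θ) = a₁∧b₁, φ(θ̄) = 1, φ(ρ) = a₁` of the basis. -/
def img1 : Fin 4 → ΛV := ![e 1, e 0 * e 1, 1, e 0]

/-- `φ₂`: the images `φ(1) = b₂, φ(θ) = a₂∧b₂, φ(θ̄) = 1, φ(ρ) = a₂` of the basis. -/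
def img2 : Fin 4 → ΛV := ![e 3, e 2 * e 3, 1, e 2]

/-- The map `𝔻(x⊗y) = x⊗y + xθ⊗θ̄y − xθ̄⊗θy − xρ⊗ρy`. -/
def 𝔻 : NA ⊗[ℝ] NA →ₗ[ℝ] NA ⊗[ℝ] NA :=
  LinearMap.id
    + TensorProduct.map (LinearMap.mulRight ℝ θ) (LinearMap.mulLeft ℝ θb)
    - TensorProduct.map (LinearMap.mulRight ℝ θb) (LinearMap.mulLeft ℝ θ)
    - TensorProduct.map (LinearMap.mulRight ℝ ρ) (LinearMap.mulLeft ℝ ρ)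

/-- The linear automorphism `[D]` of `V` with `[D]a₁ = a₁`, `[D]a₂ = a₂`,
`[D]b₁ = b₁ − a₂`, `[D]b₂ = b₂ − a₁` (in the basis order `a₁, b₁, a₂, b₂`). -/
def Dmap : V4 →ₗ[ℝ] V4 :=
  Matrix.toLin' !![1, 0, 0, -1; 0, 1, 0, 0; 0, -1, 1, 0; 0, 0, 0, 1]

lemma Nform_single1 : Nform (Pi.single 1 1) = 0 := by
  simp [Nform, QuadraticMap.weightedSumSquares_apply, Fin.sum_univ_three, Pi.single_apply]

lemma Nform_single2 : Nform (Pi.single 2 1) = 0 := by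
  simp [Nform, QuadraticMap.weightedSumSquares_apply, Fin.sum_univ_three, Pi.single_apply]

lemma hθθ : θ * θ = 0 := by
  rw [θ, CliffordAlgebra.ι_sq_scalar, Nform_single1, map_zero]

lemma hbb : θb * θb = 0 := by
  rw [θb, CliffordAlgebra.ι_sq_scalar, Nform_single2, map_zero]

lemma polar12 : QuadraticMap.polar Nform (Pi.single 1 1) (Pi.single 2 1) = 0 := by
  simp [QuadraticMap.polar, Nform, QuadraticMap.weightedSumSquares_apply, Fin.sum_univ_three,
    Pi.single_apply]

lemma hanti : θ * θb = -ρ := by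
  have h := CliffordAlgebra.ι_mul_ι_add_swap (Q := Nform) (Pi.single 1 1) (Pi.single 2 1)
  rw [polar12, map_zero, ← θ, ← θb] at h
  rw [ρ]
  exact eq_neg_of_add_eq_zero_left h

lemma hθρ : θ * ρ = 0 := by
  rw [ρ, ← mul_assoc, hanti, ρ, neg_mul, mul_assoc, hθθ, mul_zero, neg_zero]

lemma hρθ : ρ * θ = 0 := by rw [ρ, mul_assoc, hθθ, mul_zero]

lemma hbρ : θb * ρ = 0 := by rw [ρ, ← mul_assoc, hbb, zero_mul]

lemma hρb : ρ * θb = 0 := by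
  rw [ρ, mul_assoc, hanti, ρ, mul_neg, ← mul_assoc, hbb, zero_mul, neg_zero]

lemma hρρ : ρ * ρ = 0 := by rw [ρ, mul_assoc, ← ρ, hθρ, mul_zero]

-- exterior algebra lemmas
lemma esq (i : Fin 4) : e i * e i = 0 := ExteriorAlgebra.ι_sq_zero _

lemma esq' (i : Fin 4) (x : ΛV) : e i * (e i * x) = 0 := by
  rw [← mul_assoc, esq, zero_mul]

lemma eswap (i j : Fin 4) : e j * e i = -(e i * e j) := by
  have h := ExteriorAlgebra.ι_add_mul_swap (R := ℝ) (M := V4) (Pi.single i (1:ℝ)) (Pi.single j 1)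
  rw [← e, ← e] at h
  exact eq_neg_of_add_eq_zero_right h

lemma eswap' (i j : Fin 4) (x : ΛV) : e j * (e i * x) = -(e i * (e j * x)) := by
  rw [← mul_assoc, eswap i j, neg_mul, mul_assoc]

lemma Dsingle0 : Dmap (Pi.single 0 1) = Pi.single 0 1 := by
  funext k; fin_cases k <;>
    simp [Dmap, Matrix.toLin'_apply, Matrix.mulVec, dotProduct, Fin.sum_univ_four,
      Pi.single_apply]

lemma Dsingle1 : Dmap (Pi.single 1 1) = Pi.single 1 1 - Pi.single 2 1 := by
  funext k; fin_cases k <;>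
    simp [Dmap, Matrix.toLin'_apply, Matrix.mulVec, dotProduct, Fin.sum_univ_four,
      Pi.single_apply]

lemma Dsingle2 : Dmap (Pi.single 2 1) = Pi.single 2 1 := by
  funext k; fin_cases k <;>
    simp [Dmap, Matrix.toLin'_apply, Matrix.mulVec, dotProduct, Fin.sum_univ_four,
      Pi.single_apply]

lemma Dsingle3 : Dmap (Pi.single 3 1) = Pi.single 3 1 - Pi.single 0 1 := by
  funext k; fin_cases k <;>
    simp [Dmap, Matrix.toLin'_apply, Matrix.mulVec, dotProduct, Fin.sum_univ_four,
      Pi.single_apply]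

lemma mapD0 : ExteriorAlgebra.map Dmap (e 0) = e 0 := by
  rw [e, ExteriorAlgebra.map_apply_ι, Dsingle0]

lemma mapD1 : ExteriorAlgebra.map Dmap (e 1) = e 1 - e 2 := by
  rw [e, ExteriorAlgebra.map_apply_ι, Dsingle1, map_sub]; rfl

lemma mapD2 : ExteriorAlgebra.map Dmap (e 2) = e 2 := by
  rw [e, ExteriorAlgebra.map_apply_ι, Dsingle2]

lemma mapD3 : ExteriorAlgebra.map Dmap (e 3) = e 3 - e 0 := by
  rw [e, ExteriorAlgebra.map_apply_ι, Dsingle3, map_sub]; rfl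

lemma finmk2 (h : 2 < 4) : (⟨2, h⟩ : Fin 4) = 2 := rfl
lemma finmk3 (h : 3 < 4) : (⟨3, h⟩ : Fin 4) = 3 := rfl
lemma hfold : θb * θ = ρ := rfl



set_option maxHeartbeats 2000000 in
/-- with `ξ₂` the linear map determined on basis tensors of `Λ*E ⊗ Λ*E`
by `ξ₂(x⊗y) = (−1)^{d(x)(1−d(y))}·φ₁(x)∧φ₂(y)`, one has `ξ₂ ∘ 𝔻 = Λ*([D]) ∘ ξ₂`
on `Λ*E ⊗ Λ*E` (the span of the basis tensors). -/
theorem stmt14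
    (ξ₂ : NA ⊗[ℝ] NA →ₗ[ℝ] ΛV)
    (hξ : ∀ i j : Fin 4, ξ₂ (bas i ⊗ₜ[ℝ] bas j)
            = ((-1 : ℝ)) ^ (dg i * (1 - dg j)) • (img1 i * img2 j)) :
    ∀ z ∈ Submodule.span ℝ
        (Set.range fun p : Fin 4 × Fin 4 => bas p.1 ⊗ₜ[ℝ] bas p.2),
      ξ₂ (𝔻 z) = (ExteriorAlgebra.map Dmap) (ξ₂ z) := by
  intro z hz
  induction hz using Submodule.span_induction with
  | mem x hx =>
    obtain ⟨⟨i, j⟩, rfl⟩ := hx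
    have h00 := hξ 0 0; have h01 := hξ 0 1; have h02 := hξ 0 2; have h03 := hξ 0 3
    have h10 := hξ 1 0; have h11 := hξ 1 1; have h12 := hξ 1 2; have h13 := hξ 1 3
    have h20 := hξ 2 0; have h21 := hξ 2 1; have h22 := hξ 2 2; have h23 := hξ 2 3
    have h30 := hξ 3 0; have h31 := hξ 3 1; have h32 := hξ 3 2; have h33 := hξ 3 3
    simp only [bas, dg, img1, img2, Matrix.cons_val_zero, Matrix.cons_val_one, Matrix.head_cons,
      Matrix.cons_val_two, Matrix.tail_cons, Matrix.cons_val_three, Nat.mul_zero, Nat.mul_one,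
      Nat.sub_self, Nat.sub_zero, Nat.zero_mul, Nat.one_mul, pow_zero, pow_one, one_smul,
      neg_smul, one_mul, mul_one]
      at h00 h01 h02 h03 h10 h11 h12 h13 h20 h21 h22 h23 h30 h31 h32 h33
    fin_cases i <;> fin_cases j <;>
    · simp only [𝔻, LinearMap.sub_apply, LinearMap.add_apply, LinearMap.id_apply,
        TensorProduct.map_tmul, LinearMap.mulRight_apply, LinearMap.mulLeft_apply,
        map_sub, map_add]
      simp only [bas, Fin.isValue, Fin.mk_zero, Fin.mk_one, finmk2, finmk3,
        Matrix.cons_val_zero, Matrix.cons_val_one, Matrix.head_cons, Matrix.cons_val_two,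
        Matrix.tail_cons, Matrix.cons_val_three,
        one_mul, mul_one, hθθ, hbb, hanti, hfold, hθρ, hρθ, hbρ, hρb, hρρ,
        zero_tmul, tmul_zero, neg_tmul, tmul_neg, map_zero, map_neg,
        sub_zero, add_zero, zero_add, neg_neg]
      try simp only [h00, h01, h02, h03, h10, h11, h12, h13,
        h20, h21, h22, h23, h30, h31, h32, h33]
      simp only [map_mul, map_one, map_neg, map_sub, map_add, mapD0, mapD1, mapD2, mapD3,
        mul_sub, sub_mul, mul_add, add_mul, one_mul, mul_one, mul_assoc,
        esq, esq', eswap 0 1, eswap 0 2, eswap 0 3, eswap 1 2, eswap 1 3, eswap 2 3,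
        eswap' 0 1, eswap' 0 2, eswap' 0 3, eswap' 1 2, eswap' 1 3, eswap' 2 3,
        mul_neg, neg_mul, neg_neg, mul_zero, zero_mul, neg_zero, sub_zero, add_zero, zero_add]
      try abel
  | zero => simp
  | add x y hx hy ihx ihy => simp only [map_add, ihx, ihy]
  | smul r x hx ih => simp only [map_smul, ih]
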